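/- Fix a real s > 3/2. For every real A with 1/3 < A < 1, the function A ↦ L(A;s) is differentiable and its derivative equals (2s/(A+1)²)·Σ'_{i,j,k∈ℤ} (ij + ik − 2jk)/(i² + j² + k² − 2(ij+ik)·A/(A+1) + 2jk·(A−1)/(A+1))^{s+1}, where the sum omits (i,j,k) = (0,0,0). -/

import Mathlib

open Finset

/-- The quadratic form `g(A;i,j,k) = (A(i+j)² + (j+k)² + (i+k)²)/(A+1)`. -/
noncomputable def cuboidalG (A : ℝ) (p : ℤ × ℤ × ℤ) : ℝ :=
  (A * ((p.1 : ℝ) + (p.2.1 : ℝ))^2 + ((p.2.1 : ℝ) + (p.2.2 : ℝ))^2 +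
    ((p.1 : ℝ) + (p.2.2 : ℝ))^2) / (A + 1)

/-- The Epstein zeta function `L(A;s) = Σ'_{(i,j,k)≠(0,0,0)} g(A;i,j,k)^{-s}`. -/
noncomputable def epsteinL (A s : ℝ) : ℝ :=
  ∑' p : {p : ℤ × ℤ × ℤ // p ≠ 0}, (cuboidalG A p.1) ^ (-s)

namespace EpsteinAux

def mfun (p : ℤ × ℤ × ℤ) : ℕ := max p.1.natAbs (max p.2.1.natAbs p.2.2.natAbs)

lemma mem_box3 : ∀ {n : ℕ} {x : ℤ × ℤ × ℤ}, x ∈ box n ↔ mfun x = n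
  | 0, x => by simp [mfun, Prod.ext_iff]
  | n + 1, x => by
    simp [box_succ_eq_sdiff, Prod.le_def, mfun]
    omega

lemma card_box3 (n : ℕ) :
    (#(box (n+1) : Finset (ℤ × ℤ × ℤ)) : ℝ) ≤ 98 * (n+1)^2 := by
  have hsub : (Icc (-(n:ℤ×ℤ×ℤ)) n) ⊆ Icc (-(↑(n+1):ℤ×ℤ×ℤ)) (↑(n+1)) := by
    apply Icc_subset_Icc <;> push_cast <;> simp [Prod.le_def]
  rw [box_succ_eq_sdiff, card_sdiff_of_subset hsub]
  have h1 : ∀ m : ℕ, #(Icc (-(m:ℤ×ℤ×ℤ)) m) = (2*m+1)^3 := by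
    intro m
    rw [Finset.card_Icc_prod, Finset.card_Icc_prod]
    simp only [Prod.fst_natCast, Prod.snd_natCast, Prod.fst_neg, Prod.snd_neg, Int.card_Icc]
    have : ((m:ℤ) + 1 - (-(m:ℤ))).toNat = 2*m+1 := by omega
    rw [this]; ring
  rw [h1, h1]
  push_cast [Nat.cast_sub (by gcongr <;> omega : (2*n+1)^3 ≤ (2*(n+1)+1)^3)]
  ring_nf
  nlinarith [sq_nonneg (n:ℝ), (by positivity : (0:ℝ) ≤ (n:ℝ))]

lemma summable_shell {k : ℝ} (hk : 3 < k) :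
    Summable fun p : ℤ × ℤ × ℤ => (mfun p : ℝ) ^ (-k) := by
  have hex : ∀ x : ℤ × ℤ × ℤ, ∃! n : ℕ, x ∈ (↑(box n : Finset (ℤ×ℤ×ℤ)) : Set (ℤ×ℤ×ℤ)) := by
    intro x
    exact ⟨mfun x, by simp [mem_box3], fun n hn => (mem_box3.mp hn).symm⟩
  rw [summable_partition _ hex]
  · constructor
    · intro n
      exact Set.Finite.summable (Finset.finite_toSet _) (fun i => (mfun i : ℝ) ^ (-k))
    · have key : ∀ n : ℕ, ∑' i : (↑(box n : Finset (ℤ×ℤ×ℤ)) : Set (ℤ×ℤ×ℤ)),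
          ((mfun i : ℝ)) ^ (-k) = #(box n : Finset (ℤ×ℤ×ℤ)) * (n:ℝ)^(-k) := by
        intro n
        rw [tsum_congr (f := fun i : (↑(box n : Finset (ℤ×ℤ×ℤ)) : Set (ℤ×ℤ×ℤ)) => ((mfun i : ℝ)) ^ (-k))
          (g := fun _ => (n:ℝ)^(-k)) (fun i => by rw [mem_box3.mp (by exact_mod_cast i.2)]),
          tsum_const]
        simp [Nat.card_coe_set_eq, Set.ncard_coe_finset, nsmul_eq_mul]
      simp_rw [key]
      apply Summable.of_norm_bounded_eventually_nat (g := fun n => 98 * (n:ℝ)^(2-k))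
      · exact (Real.summable_nat_rpow.mpr (by linarith)).mul_left 98
      · filter_upwards [Filter.eventually_gt_atTop 0] with n hn
        obtain ⟨m, rfl⟩ := Nat.exists_eq_succ_of_ne_zero hn.ne'
        have hnpos : (0:ℝ) < (m+1:ℕ) := by positivity
        rw [Real.norm_of_nonneg (by positivity)]
        have h2 : ((m+1:ℕ):ℝ)^(2-k) = ((m+1:ℕ):ℝ)^(2:ℝ) * ((m+1:ℕ):ℝ)^(-k) := by
          rw [← Real.rpow_add hnpos]; ring_nf
        rw [h2, ← mul_assoc]
        have hb : (#(box (m+1) : Finset (ℤ×ℤ×ℤ)) : ℝ) ≤ 98 * ((m+1:ℕ):ℝ)^(2:ℝ) := calc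
          (#(box (m+1) : Finset (ℤ×ℤ×ℤ)) : ℝ) ≤ 98 * (m+1)^2 := card_box3 m
          _ = 98 * ((m+1:ℕ):ℝ)^(2:ℝ) := by rw [Real.rpow_two]; push_cast; ring
        have : (0:ℝ) ≤ ((m+1:ℕ):ℝ)^(-k) := by positivity
        nlinarith [this, hb]
  · intro p; positivity

lemma mfun_pos {p : ℤ × ℤ × ℤ} (hp : p ≠ 0) : 1 ≤ mfun p := by
  rcases p with ⟨i, j, k⟩
  have hne : i ≠ 0 ∨ j ≠ 0 ∨ k ≠ 0 := by
    by_contra h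
    push_neg at h
    exact hp (by rw [h.1, h.2.1, h.2.2]; rfl)
  have h1 : 0 < i.natAbs ∨ 0 < j.natAbs ∨ 0 < k.natAbs := by
    simpa [Int.natAbs_pos] using hne
  simp only [mfun]
  omega

lemma natAbs_sq_cast (a : ℤ) : ((a.natAbs : ℝ))^2 = (a:ℝ)^2 := by
  rw [Nat.cast_natAbs, Int.cast_abs, sq_abs]

lemma mfun_sq_le (p : ℤ × ℤ × ℤ) :
    ((mfun p : ℝ))^2 ≤ (p.1:ℝ)^2 + (p.2.1:ℝ)^2 + (p.2.2:ℝ)^2 := by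
  rcases p with ⟨i, j, k⟩
  have hcase : mfun (i,j,k) = i.natAbs ∨ mfun (i,j,k) = j.natAbs ∨ mfun (i,j,k) = k.natAbs := by
    simp only [mfun]; omega
  rcases hcase with h | h | h <;> rw [h] <;>
    simp only [natAbs_sq_cast] <;>
    nlinarith [sq_nonneg (i:ℝ), sq_nonneg (j:ℝ), sq_nonneg (k:ℝ)]

lemma comp_sq_le_mfun_sq (p : ℤ × ℤ × ℤ) :
    (p.1:ℝ)^2 ≤ ((mfun p : ℝ))^2 ∧ (p.2.1:ℝ)^2 ≤ ((mfun p : ℝ))^2 ∧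
      (p.2.2:ℝ)^2 ≤ ((mfun p : ℝ))^2 := by
  rcases p with ⟨i, j, k⟩
  have h1 : i.natAbs ≤ mfun (i,j,k) := le_max_left _ _
  have h2 : j.natAbs ≤ mfun (i,j,k) := le_trans (le_max_left _ _) (le_max_right _ _)
  have h3 : k.natAbs ≤ mfun (i,j,k) := le_trans (le_max_right _ _) (le_max_right _ _)
  refine ⟨?_, ?_, ?_⟩
  · rw [← natAbs_sq_cast]
    exact pow_le_pow_left₀ (by positivity) (by exact_mod_cast h1) 2
  · rw [← natAbs_sq_cast]
    exact pow_le_pow_left₀ (by positivity) (by exact_mod_cast h2) 2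
  · rw [← natAbs_sq_cast]
    exact pow_le_pow_left₀ (by positivity) (by exact_mod_cast h3) 2

lemma cuboidalG_lb {B : ℝ} (hB1 : 1/3 < B) (hB2 : B < 1) (n : ℤ × ℤ × ℤ) :
    ((mfun n : ℝ))^2 / 6 ≤ cuboidalG B n := by
  have hm := mfun_sq_le n
  rcases n with ⟨i, j, k⟩
  unfold cuboidalG
  rw [div_le_div_iff₀ (by norm_num) (by linarith)]
  nlinarith [sq_nonneg ((i:ℝ)+(j:ℝ)+(k:ℝ)), sq_nonneg ((i:ℝ)+(j:ℝ)), sq_nonneg ((j:ℝ)+(k:ℝ)),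
    sq_nonneg ((i:ℝ)+(k:ℝ)), hm,
    mul_nonneg (by linarith : (0:ℝ) ≤ 3*B-1) (sq_nonneg ((i:ℝ)+(j:ℝ))),
    mul_nonneg (by linarith : (0:ℝ) ≤ 1-B) (sq_nonneg ((mfun (i,j,k) : ℝ)))]

lemma cuboidalG_pos {B : ℝ} (hB1 : 1/3 < B) (hB2 : B < 1) {n : ℤ × ℤ × ℤ} (hn : n ≠ 0) :
    0 < cuboidalG B n := by
  have h := cuboidalG_lb hB1 hB2 n
  have hM : (1:ℝ) ≤ (mfun n : ℝ) := by exact_mod_cast mfun_pos hn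
  nlinarith

lemma rpow_M_bound {M : ℝ} (hM : 1 ≤ M) {G : ℝ} (hG : M^2/6 ≤ G) {c : ℝ} (hc : 0 ≤ c) :
    G ^ (-c) ≤ 6^c * M^(-(2*c)) := by
  have h0 : (0:ℝ) < M^2/6 := by positivity
  have hMpos : (0:ℝ) < M := by linarith
  have h := Real.rpow_le_rpow_of_nonpos h0 hG (neg_nonpos.mpr hc)
  refine h.trans_eq ?_
  have hM2 : (M^2 : ℝ) = M ^ ((2:ℝ)) := by rw [← Real.rpow_natCast M 2]; norm_num
  rw [Real.div_rpow (by positivity) (by norm_num), hM2, ← Real.rpow_mul hMpos.le,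
    show (2:ℝ) * (-c) = -(2*c) by ring,
    Real.rpow_neg (by norm_num : (0:ℝ) ≤ 6), div_eq_mul_inv, inv_inv]
  ring

/-- derivative value of `B ↦ cuboidalG B n ^ (-s)` -/
noncomputable def gder (s : ℝ) (n : ℤ × ℤ × ℤ) (B : ℝ) : ℝ :=
  (((n.1:ℝ) + (n.2.1:ℝ))^2 - (((n.2.1:ℝ) + (n.2.2:ℝ))^2 + ((n.1:ℝ) + (n.2.2:ℝ))^2)) / (B+1)^2
    * (-s) * cuboidalG B n ^ (-s - 1)

lemma hasDerivAt_cuboidal (n : ℤ × ℤ × ℤ) {B : ℝ} (hB : B + 1 ≠ 0) :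
    HasDerivAt (fun B => cuboidalG B n)
      ((((n.1:ℝ) + (n.2.1:ℝ))^2 - (((n.2.1:ℝ) + (n.2.2:ℝ))^2 + ((n.1:ℝ) + (n.2.2:ℝ))^2)) / (B+1)^2)
      B := by
  set X : ℝ := ((n.1:ℝ) + (n.2.1:ℝ))^2 with hX
  set Y : ℝ := ((n.2.1:ℝ) + (n.2.2:ℝ))^2 + ((n.1:ℝ) + (n.2.2:ℝ))^2 with hY
  have h1 : HasDerivAt (fun B : ℝ => B * X + Y) X B := by
    simpa using ((hasDerivAt_id B).mul_const X).add_const Y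
  have h2 : HasDerivAt (fun B : ℝ => B + 1) 1 B := (hasDerivAt_id B).add_const 1
  have h3 := h1.div h2 hB
  have heq : ∀ C : ℝ, cuboidalG C n = (C * X + Y) / (C + 1) := by
    intro C; unfold cuboidalG; rw [hX, hY]; ring_nf
  rw [show (fun B => cuboidalG B n) = fun B => (B * X + Y) / (B + 1) from funext heq]
  refine h3.congr_deriv ?_
  field_simp
  ring

lemma hasDerivAt_term (s : ℝ) {n : ℤ × ℤ × ℤ} (hn : n ≠ 0) {B : ℝ}
    (hB1 : 1/3 < B) (hB2 : B < 1) :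
    HasDerivAt (fun B => cuboidalG B n ^ (-s)) (gder s n B) B := by
  have hG := hasDerivAt_cuboidal n (by linarith : B + 1 ≠ 0)
  have hpos := cuboidalG_pos hB1 hB2 hn
  have := hG.rpow_const (p := -s) (Or.inl hpos.ne')
  simpa [gder, sub_eq_add_neg] using this

lemma gder_bound {s : ℝ} (hs : 0 < s) {n : ℤ × ℤ × ℤ} (hn : n ≠ 0) {B : ℝ}
    (hB1 : 1/3 < B) (hB2 : B < 1) :
    ‖gder s n B‖ ≤ 12 * 6^(s+1) * s * (mfun n : ℝ) ^ (-(2*s)) := by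
  set M : ℝ := (mfun n : ℝ) with hMdef
  have hM : (1:ℝ) ≤ M := by rw [hMdef]; exact_mod_cast mfun_pos hn
  have hMpos : (0:ℝ) < M := by linarith
  obtain ⟨hi, hj, hk⟩ := comp_sq_le_mfun_sq n
  set X : ℝ := ((n.1:ℝ) + (n.2.1:ℝ))^2 with hX
  set Y : ℝ := ((n.2.1:ℝ) + (n.2.2:ℝ))^2 + ((n.1:ℝ) + (n.2.2:ℝ))^2 with hY
  have hXY : |X - Y| ≤ 12 * M^2 := by
    rw [abs_le]
    constructor <;> rw [hX, hY] <;>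
      nlinarith [sq_nonneg ((n.1:ℝ) - (n.2.1:ℝ)), sq_nonneg ((n.2.1:ℝ) - (n.2.2:ℝ)),
        sq_nonneg ((n.1:ℝ) - (n.2.2:ℝ)), sq_nonneg ((n.1:ℝ) + (n.2.1:ℝ)),
        sq_nonneg ((n.2.1:ℝ) + (n.2.2:ℝ)), sq_nonneg ((n.1:ℝ) + (n.2.2:ℝ)), hi, hj, hk]
  have hGlb : M^2/6 ≤ cuboidalG B n := cuboidalG_lb hB1 hB2 n
  have hGpos : 0 < cuboidalG B n := cuboidalG_pos hB1 hB2 hn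
  have hrpow : cuboidalG B n ^ (-(s+1)) ≤ 6^(s+1) * M^(-(2*(s+1))) :=
    rpow_M_bound hM hGlb (by linarith)
  have hexp : cuboidalG B n ^ (-s-1) = cuboidalG B n ^ (-(s+1)) := by ring_nf
  have hden : (1:ℝ) ≤ (B+1)^2 := by nlinarith
  have habs : ‖gder s n B‖ = |X - Y| / (B+1)^2 * s * cuboidalG B n ^ (-s-1) := by
    rw [gder, Real.norm_eq_abs, abs_mul, abs_mul, abs_div, abs_neg, abs_of_nonneg hs.le,
      abs_of_nonneg (Real.rpow_nonneg hGpos.le _), abs_of_nonneg (sq_nonneg (B+1))]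
  rw [habs, hexp]
  have h5 : |X - Y| / (B+1)^2 ≤ 12 * M^2 := by
    rw [div_le_iff₀ (by positivity)]
    nlinarith [abs_nonneg (X - Y)]
  calc |X - Y| / (B+1)^2 * s * cuboidalG B n ^ (-(s+1))
      ≤ (12 * M^2) * s * (6^(s+1) * M^(-(2*(s+1)))) := by
        refine mul_le_mul (mul_le_mul_of_nonneg_right h5 hs.le) hrpow
          (Real.rpow_nonneg hGpos.le _) (by positivity)
    _ = 12 * 6^(s+1) * s * (M^2 * M^(-(2*(s+1)))) := by ring
    _ = 12 * 6^(s+1) * s * M ^ (-(2*s)) := by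
        congr 1
        rw [show (M^2 : ℝ) = M ^ ((2:ℝ)) by rw [← Real.rpow_natCast M 2]; norm_num,
          ← Real.rpow_add hMpos, show (2:ℝ) + -(2*(s+1)) = -(2*s) by ring]

lemma term_bound {s : ℝ} (hs : 0 < s) {n : ℤ × ℤ × ℤ} (hn : n ≠ 0) {B : ℝ}
    (hB1 : 1/3 < B) (hB2 : B < 1) :
    cuboidalG B n ^ (-s) ≤ 6^s * (mfun n : ℝ) ^ (-(2*s)) :=
  rpow_M_bound (by exact_mod_cast mfun_pos hn) (cuboidalG_lb hB1 hB2 n) hs.le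

/-- the reindexing bijection `(i,j,k) ↦ (i-j, -k, j)` -/
def emap : (ℤ × ℤ × ℤ) ≃ (ℤ × ℤ × ℤ) where
  toFun p := (p.1 - p.2.1, -p.2.2, p.2.1)
  invFun q := (q.1 + q.2.2, q.2.2, -q.2.1)
  left_inv p := by simp [Prod.ext_iff]
  right_inv q := by simp [Prod.ext_iff]

lemma emap_ne_zero {p : ℤ × ℤ × ℤ} : emap p ≠ 0 ↔ p ≠ 0 := by
  rcases p with ⟨i, j, k⟩
  simp only [emap, Equiv.coe_fn_mk, ne_eq, Prod.ext_iff, Prod.mk.injEq]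
  constructor <;> intro h <;> simp_all <;> omega

end EpsteinAux

open EpsteinAux in
theorem epsteinL_hasDerivAt (s : ℝ) (hs : s > 3/2) (A : ℝ) (hA1 : 1/3 < A) (hA2 : A < 1) :
    HasDerivAt (fun B : ℝ => epsteinL B s)
      (2 * s / (A + 1)^2 * ∑' p : {p : ℤ × ℤ × ℤ // p ≠ 0},
        ((p.1.1 * p.1.2.1 + p.1.1 * p.1.2.2 - 2 * p.1.2.1 * p.1.2.2 : ℤ) : ℝ) /
          ((p.1.1 : ℝ)^2 + (p.1.2.1 : ℝ)^2 + (p.1.2.2 : ℝ)^2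
            - 2 * ((p.1.1 : ℝ) * (p.1.2.1 : ℝ) + (p.1.1 : ℝ) * (p.1.2.2 : ℝ)) * (A / (A + 1))
            + 2 * (p.1.2.1 : ℝ) * (p.1.2.2 : ℝ) * ((A - 1) / (A + 1))) ^ (s + 1)) A := by
  have hspos : (0:ℝ) < s := by linarith
  set S := {p : ℤ × ℤ × ℤ // p ≠ 0}
  have hu : Summable (fun n : S => 12 * 6^(s+1) * s * (mfun n.1 : ℝ) ^ (-(2*s))) := by
    exact ((summable_shell (by linarith : (3:ℝ) < 2*s)).comp_injective
      Subtype.val_injective).mul_left _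
  have hg : ∀ (n : S) (B : ℝ), B ∈ Set.Ioo (1/3 : ℝ) 1 →
      HasDerivAt (fun B => cuboidalG B n.1 ^ (-s)) (gder s n.1 B) B :=
    fun n B hB => hasDerivAt_term s n.2 hB.1 hB.2
  have hg' : ∀ (n : S) (B : ℝ), B ∈ Set.Ioo (1/3 : ℝ) 1 →
      ‖gder s n.1 B‖ ≤ 12 * 6^(s+1) * s * (mfun n.1 : ℝ) ^ (-(2*s)) :=
    fun n B hB => gder_bound hspos n.2 hB.1 hB.2
  have hg0 : Summable fun n : S => cuboidalG A n.1 ^ (-s) := by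
    apply Summable.of_nonneg_of_le (fun n => Real.rpow_nonneg (by
      exact (cuboidalG_pos hA1 hA2 n.2).le) _)
      (fun n => term_bound hspos n.2 hA1 hA2)
    exact ((summable_shell (by linarith : (3:ℝ) < 2*s)).comp_injective
      Subtype.val_injective).mul_left _
  have hA' : A ∈ Set.Ioo (1/3 : ℝ) 1 := ⟨hA1, hA2⟩
  have key := hasDerivAt_tsum_of_isPreconnected hu isOpen_Ioo isPreconnected_Ioo
    hg hg' hA' hg0 hA'
  have heL : (fun B : ℝ => epsteinL B s) = fun z => ∑' n : S, cuboidalG z n.1 ^ (-s) := rfl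
  rw [heL]
  refine key.congr_deriv (Eq.symm ?_)
  -- now show the sums agree
  have hA1' : A + 1 ≠ 0 := by linarith
  -- equivalence on the subtype
  have hiff : ∀ p : ℤ × ℤ × ℤ, p ≠ 0 ↔ emap p ≠ 0 := fun p => (emap_ne_zero (p := p)).symm
  let eS : S ≃ S := emap.subtypeEquiv hiff
  have hpoint : ∀ p : S, gder s (emap p.1) A =
      2 * s / (A + 1)^2 *
        (((p.1.1 * p.1.2.1 + p.1.1 * p.1.2.2 - 2 * p.1.2.1 * p.1.2.2 : ℤ) : ℝ) /
          ((p.1.1 : ℝ)^2 + (p.1.2.1 : ℝ)^2 + (p.1.2.2 : ℝ)^2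
            - 2 * ((p.1.1 : ℝ) * (p.1.2.1 : ℝ) + (p.1.1 : ℝ) * (p.1.2.2 : ℝ)) * (A / (A + 1))
            + 2 * (p.1.2.1 : ℝ) * (p.1.2.2 : ℝ) * ((A - 1) / (A + 1))) ^ (s + 1)) := by
    rintro ⟨⟨i, j, k⟩, hp⟩
    simp only
    have hq_ne : ((i - j, -k, j) : ℤ × ℤ × ℤ) ≠ 0 := by
      have h := emap_ne_zero (p := (i, j, k))
      simp only [emap, Equiv.coe_fn_mk] at h
      exact h.mpr hp
    have hDpos : 0 < cuboidalG A ((i - j, -k, j) : ℤ × ℤ × ℤ) :=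
      cuboidalG_pos hA1 hA2 hq_ne
    have hD_eq : cuboidalG A ((i - j, -k, j) : ℤ × ℤ × ℤ) =
        ((i : ℝ)^2 + (j : ℝ)^2 + (k : ℝ)^2
          - 2 * ((i : ℝ) * (j : ℝ) + (i : ℝ) * (k : ℝ)) * (A / (A + 1))
          + 2 * (j : ℝ) * (k : ℝ) * ((A - 1) / (A + 1))) := by
      unfold cuboidalG
      push_cast
      field_simp
      ring
    have hDpos' : (0:ℝ) <
        ((i : ℝ)^2 + (j : ℝ)^2 + (k : ℝ)^2
          - 2 * ((i : ℝ) * (j : ℝ) + (i : ℝ) * (k : ℝ)) * (A / (A + 1))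
          + 2 * (j : ℝ) * (k : ℝ) * ((A - 1) / (A + 1))) := hD_eq ▸ hDpos
    simp only [gder, emap, Equiv.coe_fn_mk]
    rw [hD_eq]
    rw [show (-s - 1 : ℝ) = -(s+1) by ring, Real.rpow_neg hDpos'.le, div_eq_mul_inv
      (((i * j + i * k - 2 * j * k : ℤ) : ℝ))]
    push_cast
    ring
  symm
  calc ∑' n : S, gder s n.1 A
      = ∑' p : S, gder s (emap p.1) A := (Equiv.tsum_eq eS (fun n => gder s n.1 A)).symm
    _ = ∑' p : S, 2 * s / (A + 1)^2 *
        (((p.1.1 * p.1.2.1 + p.1.1 * p.1.2.2 - 2 * p.1.2.1 * p.1.2.2 : ℤ) : ℝ) /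
          ((p.1.1 : ℝ)^2 + (p.1.2.1 : ℝ)^2 + (p.1.2.2 : ℝ)^2
            - 2 * ((p.1.1 : ℝ) * (p.1.2.1 : ℝ) + (p.1.1 : ℝ) * (p.1.2.2 : ℝ)) * (A / (A + 1))
            + 2 * (p.1.2.1 : ℝ) * (p.1.2.2 : ℝ) * ((A - 1) / (A + 1))) ^ (s + 1)) :=
        tsum_congr hpoint
    _ = _ := tsum_mul_left
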